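/- (Lemma: expansion of the order-flow regularized model in terms of the price regularized model.) Let Λ be a cross-impact model which is split-invariant and rotation-invariant, let (Σ,Ω,R) be a triple in its domain, let V be a linear subspace of ℝⁿ, and let ε > 0. Then Λ(Σ^q_ε, Ω^q_ε, R^q_ε) = Π̄_V Λ(Σ^p_ε, Ω^p_ε, R^p_ε) Π̄_V + ε⁻¹ [ Π̄_V Λ(Σ^p_ε, Ω^p_ε, R^p_ε) Π_V + Π_V Λ(Σ^p_ε, Ω^p_ε, R^p_ε) Π̄_V ] + ε⁻² Π_V Λ(Σ^p_ε, Ω^p_ε, R^p_ε) Π_V. -/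

import Mathlib

open Matrix
open scoped Classical

/-- `sqrtm A` is the unique symmetric positive semidefinite square root of a
symmetric positive semidefinite real matrix `A` (junk value `0` otherwise). -/
noncomputable def sqrtm {n : ℕ} (A : Matrix (Fin n) (Fin n) ℝ) : Matrix (Fin n) (Fin n) ℝ :=
  if h : A.PosSemidef then (h.1.eigenvectorUnitary : Matrix (Fin n) (Fin n) ℝ) *
    diagonal ((↑) ∘ Real.sqrt ∘ h.1.eigenvalues) * (star h.1.eigenvectorUnitary : Matrix (Fin n) (Fin n) ℝ) else 0

/-- The Kyle cross-impact matrix `Λ_kyle(Σ,Ω) = (√Ω)⁻¹ √(√Ω Σ √Ω) (√Ω)⁻¹`. -/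
noncomputable def kyle {n : ℕ} (S W : Matrix (Fin n) (Fin n) ℝ) : Matrix (Fin n) (Fin n) ℝ :=
  (sqrtm W)⁻¹ * sqrtm (sqrtm W * S * sqrtm W) * (sqrtm W)⁻¹

/-- The matrix of the orthogonal projection of `ℝⁿ` (with the standard inner product)
onto the linear subspace `V`. -/
noncomputable def projMat {n : ℕ} (V : Submodule ℝ (EuclideanSpace ℝ (Fin n))) :
    Matrix (Fin n) (Fin n) ℝ :=
  LinearMap.toMatrix' ((EuclideanSpace.equiv (Fin n) ℝ).toLinearMap ∘ₗ V.subtype ∘ₗ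
    (V.orthogonalProjectionOnto).toLinearMap ∘ₗ ((EuclideanSpace.equiv (Fin n) ℝ).symm.toLinearMap))

/-- The regularizing matrix `Π̄_V + ε Π_V`. -/
noncomputable def reg {n : ℕ} (V : Submodule ℝ (EuclideanSpace ℝ (Fin n))) (ε : ℝ) :
    Matrix (Fin n) (Fin n) ℝ :=
  (1 - projMat V) + ε • projMat V

variable {n : ℕ} (V : Submodule ℝ (EuclideanSpace ℝ (Fin n)))

lemma projMat_mul_self : projMat V * projMat V = projMat V := by
  rw [projMat, ← LinearMap.toMatrix'_comp]
  congr 1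
  ext x i
  have hcan : ∀ z : EuclideanSpace ℝ (Fin n),
      (EuclideanSpace.equiv (Fin n) ℝ).symm.toLinearMap
        ((EuclideanSpace.equiv (Fin n) ℝ).toLinearMap z) = z := fun _ => rfl
  simp only [LinearMap.coe_comp, Function.comp_apply, hcan, Submodule.subtype_apply]
  simp [Submodule.orthogonalProjectionOnto_mem_subspace_eq_self, Submodule.starProjection_eq_self_iff.mpr (Submodule.starProjection_apply_mem _ _)]

lemma toEuclideanLin_projMat : (projMat V).toEuclideanLin
    = V.subtype ∘ₗ (V.orthogonalProjectionOnto).toLinearMap := by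
  simp only [Matrix.toEuclideanLin, projMat, LinearEquiv.trans_apply, Matrix.toLin'_toMatrix']
  ext x i
  simp [EuclideanSpace.equiv]

lemma projMat_isHermitian : (projMat V).IsHermitian := by
  rw [isHermitian_iff_isSymmetric, toEuclideanLin_projMat]
  exact Submodule.starProjection_isSymmetric V

lemma projMat_transpose : (projMat V)ᵀ = projMat V := by
  rw [← conjTranspose_eq_transpose_of_trivial]
  exact projMat_isHermitian V

lemma projMat_posSemidef : (projMat V).PosSemidef := by
  have := posSemidef_conjTranspose_mul_self (projMat V)
  rwa [(projMat_isHermitian V).eq, projMat_mul_self] at this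

lemma one_sub_projMat_mul_self : (1 - projMat V) * (1 - projMat V) = 1 - projMat V := by
  simp [sub_mul, mul_sub, projMat_mul_self]

lemma one_sub_projMat_isHermitian : (1 - projMat V).IsHermitian := by
  exact isHermitian_one.sub (projMat_isHermitian V)

lemma reg_mul_reg (a b : ℝ) : reg V a * reg V b = reg V (a * b) := by
  simp only [reg, sub_mul, mul_sub, add_mul, mul_add, one_mul, mul_one, smul_mul_assoc,
    mul_smul_comm, smul_smul, projMat_mul_self, smul_sub]
  module

lemma reg_one : reg V 1 = 1 := by
  simp [reg]

lemma reg_transpose (ε : ℝ) : (reg V ε)ᵀ = reg V ε := by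
  simp [reg, transpose_add, transpose_sub, transpose_smul, projMat_transpose]

lemma reg_posDef {ε : ℝ} (hε : 0 < ε) : (reg V ε).PosDef := by
  set P := projMat V with hPdef
  set Q := 1 - P with hQdef
  have hP2 : P * P = P := projMat_mul_self V
  have hPh : Pᴴ = P := (projMat_isHermitian V).eq
  have hQ2 : Q * Q = Q := one_sub_projMat_mul_self V
  have hQh : Qᴴ = Q := by
    rw [hQdef, conjTranspose_sub, conjTranspose_one, hPh]
  refine posDef_iff_dotProduct_mulVec.mpr ⟨?_, ?_⟩
  · show (Q + ε • P)ᴴ = Q + ε • P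
    rw [conjTranspose_add, conjTranspose_smul, hQh, hPh, star_trivial]
  · intro x hx
    rw [show reg V ε = Q + ε • P from rfl]
    have key : ∀ (A : Matrix (Fin n) (Fin n) ℝ), Aᴴ = A → A * A = A →
        dotProduct (star x) (A *ᵥ x) = dotProduct (star (A *ᵥ x)) (A *ᵥ x) := by
      intro A hAh hA2
      conv_lhs => rw [← hA2]
      rw [← mulVec_mulVec, dotProduct_mulVec, star_mulVec, hAh]
    have hsum : dotProduct (star x) ((Q + ε • P) *ᵥ x)
        = dotProduct (star (Q *ᵥ x)) (Q *ᵥ x) + ε * dotProduct (star (P *ᵥ x)) (P *ᵥ x) := by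
      rw [add_mulVec, dotProduct_add, smul_mulVec, dotProduct_smul, key Q hQh hQ2,
        key P hPh hP2, smul_eq_mul]
    rw [hsum]
    by_cases hq : Q *ᵥ x = 0
    · have hp : P *ᵥ x ≠ 0 := by
        intro hp
        apply hx
        have : (Q + P) *ᵥ x = x := by rw [hQdef, sub_add_cancel, one_mulVec]
        rw [add_mulVec, hq, hp, add_zero] at this
        exact this.symm
      have h1 : (0:ℝ) < dotProduct (star (P *ᵥ x)) (P *ᵥ x) :=
        dotProduct_star_self_pos_iff.mpr hp
      have h2 : (0:ℝ) ≤ dotProduct (star (Q *ᵥ x)) (Q *ᵥ x) :=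
        dotProduct_star_self_nonneg _
      nlinarith
    · have h1 : (0:ℝ) < dotProduct (star (Q *ᵥ x)) (Q *ᵥ x) :=
        dotProduct_star_self_pos_iff.mpr hq
      have h2 : (0:ℝ) ≤ dotProduct (star (P *ᵥ x)) (P *ᵥ x) :=
        dotProduct_star_self_nonneg _
      nlinarith
section aux
variable {n : ℕ}

lemma posDef_conj_aux {A B C : Matrix (Fin n) (Fin n) ℝ} (hA : A.PosDef) (hCB : C * B = 1) :
    (Bᴴ * A * B).PosDef := by
  refine PosDef.of_dotProduct_mulVec_pos (Matrix.isHermitian_conjTranspose_mul_mul B hA.1) fun x hx => ?_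
  have hBx : B *ᵥ x ≠ 0 := by
    intro h
    apply hx
    have : C *ᵥ (B *ᵥ x) = C *ᵥ 0 := by rw [h]
    rwa [mulVec_mulVec, hCB, one_mulVec, mulVec_zero] at this
  simpa only [star_mulVec, dotProduct_mulVec, vecMul_vecMul] using hA.dotProduct_mulVec_pos hBx
end aux

section comb
variable {n : ℕ}

lemma comb_invariance
    (Λ : Matrix (Fin n) (Fin n) ℝ → Matrix (Fin n) (Fin n) ℝ → Matrix (Fin n) (Fin n) ℝ → Matrix (Fin n) (Fin n) ℝ)
    (hsplit : ∀ S W R : Matrix (Fin n) (Fin n) ℝ, S.PosSemidef → W.PosDef → ∀ d : Fin n → ℝ, (∀ i, 0 < d i) →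
      Λ ((diagonal d)⁻¹ * S * (diagonal d)⁻¹) (diagonal d * W * diagonal d)
        ((diagonal d)⁻¹ * R * diagonal d)
        = (diagonal d)⁻¹ * Λ S W R * (diagonal d)⁻¹)
    (hrot : ∀ S W R : Matrix (Fin n) (Fin n) ℝ, S.PosSemidef → W.PosDef → ∀ O : Matrix (Fin n) (Fin n) ℝ, O * Oᵀ = 1 →
      Λ (O * S * Oᵀ) (O * W * Oᵀ) (O * R * Oᵀ) = O * Λ S W R * Oᵀ)
    (M N : Matrix (Fin n) (Fin n) ℝ) (hM : M.PosDef) (hMN : M * N = 1) (hNM : N * M = 1)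
    (S W R : Matrix (Fin n) (Fin n) ℝ) (hS : S.PosSemidef) (hW : W.PosDef) :
    Λ (N * S * N) (M * W * M) (N * R * M) = N * Λ S W R * N := by
  classical
  set U : Matrix (Fin n) (Fin n) ℝ := (Matrix.IsHermitian.eigenvectorUnitary hM.1 : Matrix (Fin n) (Fin n) ℝ) with hUdef
  set d : Fin n → ℝ := hM.1.eigenvalues with hddef
  have hd : ∀ i, 0 < d i := fun i => hM.eigenvalues_pos i
  have hU : U * Uᵀ = 1 := by
    have := (Matrix.mem_unitaryGroup_iff).mp (Matrix.IsHermitian.eigenvectorUnitary hM.1).2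
    rwa [Matrix.star_eq_conjTranspose, conjTranspose_eq_transpose_of_trivial] at this
  have hU' : Uᵀ * U = 1 := by
    have := (Matrix.mem_unitaryGroup_iff').mp (Matrix.IsHermitian.eigenvectorUnitary hM.1).2
    rwa [Matrix.star_eq_conjTranspose, conjTranspose_eq_transpose_of_trivial] at this
  set D : Matrix (Fin n) (Fin n) ℝ := diagonal d with hDdef
  set E : Matrix (Fin n) (Fin n) ℝ := diagonal (fun i => (d i)⁻¹) with hEdef
  have hDE : D * E = 1 := by
    rw [hDdef, hEdef, diagonal_mul_diagonal]
    rw [show (fun i => d i * (d i)⁻¹) = fun _ => (1:ℝ) from funext fun i => mul_inv_cancel₀ (hd i).ne']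
    exact diagonal_one
  have hED : E * D = 1 := by
    rw [hDdef, hEdef, diagonal_mul_diagonal]
    rw [show (fun i => (d i)⁻¹ * d i) = fun _ => (1:ℝ) from funext fun i => inv_mul_cancel₀ (hd i).ne']
    exact diagonal_one
  have hEinv : (diagonal d)⁻¹ = E := (Matrix.inv_eq_right_inv hDE)
  have hMeq : M = U * D * Uᵀ := by
    have := hM.1.spectral_theorem
    rwa [Unitary.conjStarAlgAut_apply, Matrix.star_eq_conjTranspose, conjTranspose_eq_transpose_of_trivial,
      show (RCLike.ofReal ∘ hM.1.eigenvalues : Fin n → ℝ) = d from rfl] at this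
  have hNeq : N = U * E * Uᵀ := by
    have h1 : M * (U * E * Uᵀ) = 1 := by
      rw [hMeq]
      calc U * D * Uᵀ * (U * E * Uᵀ) = U * D * (Uᵀ * U) * E * Uᵀ := by
            simp only [mul_assoc]
        _ = 1 := by rw [hU', mul_one, mul_assoc U D E, hDE, mul_one, hU]
    calc N = N * (M * (U * E * Uᵀ)) := by rw [h1, mul_one]
      _ = (N * M) * (U * E * Uᵀ) := by simp only [mul_assoc]
      _ = U * E * Uᵀ := by rw [hNM, one_mul]
  -- transposes of D, E
  have hDt : Dᵀ = D := diagonal_transpose d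
  have hEt : Eᵀ = E := diagonal_transpose _
  set S₁ := Uᵀ * S * U with hS₁def
  set W₁ := Uᵀ * W * U with hW₁def
  set R₁ := Uᵀ * R * U with hR₁def
  have hS₁ : S₁.PosSemidef := by
    have := hS.conjTranspose_mul_mul_same U
    rwa [conjTranspose_eq_transpose_of_trivial] at this
  have hW₁ : W₁.PosDef := by
    have := posDef_conj_aux (B := U) (C := Uᵀ) hW hU'
    rwa [conjTranspose_eq_transpose_of_trivial] at this
  have hSE : (E * S₁ * E).PosSemidef := by
    have := hS₁.mul_mul_conjTranspose_same E
    rwa [conjTranspose_eq_transpose_of_trivial, hEt] at this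
  have hWD : (D * W₁ * D).PosDef := by
    have := posDef_conj_aux (B := D) (C := E) hW₁ hED
    rwa [conjTranspose_eq_transpose_of_trivial, hDt] at this
  have h1 := hrot (E * S₁ * E) (D * W₁ * D) (E * R₁ * D) hSE hWD U hU
  have h2 := hsplit S₁ W₁ R₁ hS₁ hW₁ d hd
  rw [hEinv] at h2
  have h3 := hrot S W R hS hW Uᵀ (by rw [transpose_transpose]; exact hU')
  rw [transpose_transpose] at h3
  have e1 : N * S * N = U * (E * S₁ * E) * Uᵀ := by
    rw [hNeq, hS₁def]; simp only [mul_assoc]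
  have e2 : M * W * M = U * (D * W₁ * D) * Uᵀ := by
    rw [hMeq, hW₁def]; simp only [mul_assoc]
  have e3 : N * R * M = U * (E * R₁ * D) * Uᵀ := by
    rw [hNeq, hMeq, hR₁def]; simp only [mul_assoc]
  rw [e1, e2, e3, h1, h2, h3, hNeq]
  simp only [mul_assoc]
end comb

/-- expansion of the order-flow regularized model in terms of the
price regularized model. -/
theorem expansion_fragmentation_liquidity {n : ℕ}
    (Λ : Matrix (Fin n) (Fin n) ℝ → Matrix (Fin n) (Fin n) ℝ → Matrix (Fin n) (Fin n) ℝ → Matrix (Fin n) (Fin n) ℝ)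
    (hsplit : ∀ S W R : Matrix (Fin n) (Fin n) ℝ, S.PosSemidef → W.PosDef → ∀ d : Fin n → ℝ, (∀ i, 0 < d i) →
      Λ ((diagonal d)⁻¹ * S * (diagonal d)⁻¹) (diagonal d * W * diagonal d)
        ((diagonal d)⁻¹ * R * diagonal d)
        = (diagonal d)⁻¹ * Λ S W R * (diagonal d)⁻¹)
    (hrot : ∀ S W R : Matrix (Fin n) (Fin n) ℝ, S.PosSemidef → W.PosDef → ∀ O : Matrix (Fin n) (Fin n) ℝ, O * Oᵀ = 1 →
      Λ (O * S * Oᵀ) (O * W * Oᵀ) (O * R * Oᵀ) = O * Λ S W R * Oᵀ)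
    (S W R : Matrix (Fin n) (Fin n) ℝ) (hS : S.PosSemidef) (hW : W.PosDef)
    (V : Submodule ℝ (EuclideanSpace ℝ (Fin n))) (ε : ℝ) (hε : 0 < ε) :
    Λ S (reg V ε * W * reg V ε) (R * reg V ε)
      = (1 - projMat V) * Λ (reg V ε * S * reg V ε) W (reg V ε * R) * (1 - projMat V)
        + ε⁻¹ • ((1 - projMat V) * Λ (reg V ε * S * reg V ε) W (reg V ε * R) * projMat V
            + projMat V * Λ (reg V ε * S * reg V ε) W (reg V ε * R) * (1 - projMat V))
        + (ε ^ 2)⁻¹ • (projMat V * Λ (reg V ε * S * reg V ε) W (reg V ε * R) * projMat V) := by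
  classical
  set P := projMat V with hPdef
  set M := reg V ε with hMdef
  set N := reg V ε⁻¹ with hNdef
  have hMN : M * N = 1 := by
    rw [hMdef, hNdef, reg_mul_reg, mul_inv_cancel₀ hε.ne', reg_one]
  have hNM : N * M = 1 := by
    rw [hMdef, hNdef, reg_mul_reg, inv_mul_cancel₀ hε.ne', reg_one]
  have hMpd : M.PosDef := reg_posDef V hε
  have hMh : Mᴴ = M := by
    rw [conjTranspose_eq_transpose_of_trivial, hMdef, reg_transpose]
  have hS' : (M * S * M).PosSemidef := by
    have := hS.mul_mul_conjTranspose_same M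
    rwa [hMh] at this
  have hmain := comb_invariance Λ hsplit hrot M N hMpd hMN hNM (M * S * M) W (M * R) hS' hW
  have a1 : N * (M * S * M) * N = S := by
    calc N * (M * S * M) * N = (N * M) * S * (M * N) := by simp only [mul_assoc]
      _ = S := by rw [hNM, hMN, one_mul, mul_one]
  have a2 : N * (M * R) * M = R * M := by
    calc N * (M * R) * M = (N * M) * (R * M) := by simp only [mul_assoc]
      _ = R * M := by rw [hNM, one_mul]
  rw [a1, a2] at hmain
  rw [hmain]
  have hN : N = (1 - P) + ε⁻¹ • P := rfl
  rw [hN]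
  simp only [add_mul, mul_add, smul_mul_assoc, mul_smul_comm, smul_smul, smul_add]
  rw [sq, mul_inv]
  module
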